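/- Assume (A2). If M is a menu with M ⊆ M_NSR, then M = M_NSR. (Consequently, every no-swap-regret learning algorithm has the same asymptotic menu, namely M_NSR.) -/

import Mathlib

open Finset

noncomputable section

/-- The product CSP `x ⊗ y`. -/
def prodCSP {m n : ℕ} (x : Fin m → ℝ) (y : Fin n → ℝ) : Fin m × Fin n → ℝ :=
  fun p => x p.1 * y p.2

/-- The `j`-th vertex `e_j` of a simplex. -/
def pureVec {k : ℕ} (j : Fin k) : Fin k → ℝ := fun j' => if j' = j then 1 else 0

/-- Linear extension of a payoff to CSPs. -/
def linCSP {m n : ℕ} (u : Fin m → Fin n → ℝ) (φ : Fin m × Fin n → ℝ) : ℝ :=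
  ∑ p : Fin m × Fin n, φ p * u p.1 p.2

/-- Payoff the learner would get by always deviating to the pure action `j'`. -/
def devCSP {m n : ℕ} (u : Fin m → Fin n → ℝ) (φ : Fin m × Fin n → ℝ) (j' : Fin n) : ℝ :=
  ∑ p : Fin m × Fin n, φ p * u p.1 j'

/-- Bilinear extension of a payoff to mixed strategies. -/
def mixPay {m n : ℕ} (u : Fin m → Fin n → ℝ) (x : Fin m → ℝ) (y : Fin n → ℝ) : ℝ :=
  ∑ i, ∑ j, x i * y j * u i j

/-- Pure best responses of the learner to the optimizer mixed strategy `x`. -/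
def BRL {m n : ℕ} (u : Fin m → Fin n → ℝ) (x : Fin m → ℝ) : Set (Fin n) :=
  {j | ∀ j' : Fin n, (∑ i, x i * u i j') ≤ ∑ i, x i * u i j}

/-- A CSP is no-regret. -/
def NoRegret {m n : ℕ} (u : Fin m → Fin n → ℝ) (φ : Fin m × Fin n → ℝ) : Prop :=
  ∀ j' : Fin n, devCSP u φ j' ≤ linCSP u φ

/-- A CSP is no-swap-regret. -/
def NoSwapRegret {m n : ℕ} (u : Fin m → Fin n → ℝ) (φ : Fin m × Fin n → ℝ) : Prop :=
  ∀ j j' : Fin n, (∑ i, φ (i, j) * u i j') ≤ ∑ i, φ (i, j) * u i j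

/-- The no-regret menu: all no-regret CSPs. -/
def MNR {m n : ℕ} (u : Fin m → Fin n → ℝ) : Set (Fin m × Fin n → ℝ) :=
  {φ | φ ∈ stdSimplex ℝ (Fin m × Fin n) ∧ NoRegret u φ}

/-- The no-swap-regret menu: all no-swap-regret CSPs. -/
def MNSR {m n : ℕ} (u : Fin m → Fin n → ℝ) : Set (Fin m × Fin n → ℝ) :=
  {φ | φ ∈ stdSimplex ℝ (Fin m × Fin n) ∧ NoSwapRegret u φ}

/-- A menu: a closed convex subset of the simplex of CSPs such that every optimizer
mixed strategy has some product response inside the set. -/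
def IsMenu {m n : ℕ} (M : Set (Fin m × Fin n → ℝ)) : Prop :=
  IsClosed M ∧ Convex ℝ M ∧ M ⊆ stdSimplex ℝ (Fin m × Fin n) ∧
    ∀ x ∈ stdSimplex ℝ (Fin m), ∃ y ∈ stdSimplex ℝ (Fin n), prodCSP x y ∈ M

/-- The learner's value when the optimizer with payoff `uO` picks their favorite point
of the menu `M`, breaking ties in the learner's favor. -/
def VL {m n : ℕ} (uL uO : Fin m → Fin n → ℝ) (M : Set (Fin m × Fin n → ℝ)) : ℝ :=
  sSup (linCSP uL '' {φ ∈ M | ∀ ψ ∈ M, linCSP uO ψ ≤ linCSP uO φ})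

/-- `M'` Pareto-dominates `M` (for the learner payoff `uL`). -/
def ParetoDominates {m n : ℕ} (uL : Fin m → Fin n → ℝ)
    (M' M : Set (Fin m × Fin n → ℝ)) : Prop :=
  (∀ uO : Fin m → Fin n → ℝ, VL uL uO M ≤ VL uL uO M') ∧
    ∃ uO : Fin m → Fin n → ℝ, VL uL uO M < VL uL uO M'

/-- A menu is Pareto-optimal if it is a menu and no menu Pareto-dominates it. -/
def ParetoOptimal {m n : ℕ} (uL : Fin m → Fin n → ℝ) (M : Set (Fin m × Fin n → ℝ)) : Prop :=
  IsMenu M ∧ ∀ M' : Set (Fin m × Fin n → ℝ), IsMenu M' → ¬ ParetoDominates uL M' M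

/-- (A2): no weakly dominated learner actions. -/
def A2cond {m n : ℕ} (u : Fin m → Fin n → ℝ) : Prop :=
  ∀ j : Fin n, (∃ x ∈ stdSimplex ℝ (Fin m), j ∈ BRL u x) →
    ∃ x' ∈ stdSimplex ℝ (Fin m), BRL u x' = {j}

/-- `U^-(M)`: the minimal learner utility over `M`. -/
def UminusVal {m n : ℕ} (u : Fin m → Fin n → ℝ) (M : Set (Fin m × Fin n → ℝ)) : ℝ :=
  sInf (linCSP u '' M)

/-- `U^+(M)`: the maximal learner utility over `M`. -/
def UplusVal {m n : ℕ} (u : Fin m → Fin n → ℝ) (M : Set (Fin m × Fin n → ℝ)) : ℝ :=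
  sSup (linCSP u '' M)

/-- `M^-`: the set of learner-utility-minimizing points of `M`. -/
def MminusSet {m n : ℕ} (u : Fin m → Fin n → ℝ) (M : Set (Fin m × Fin n → ℝ)) :
    Set (Fin m × Fin n → ℝ) :=
  {φ ∈ M | linCSP u φ = UminusVal u M}

/-- `M^+`: the set of learner-utility-maximizing points of `M`. -/
def MplusSet {m n : ℕ} (u : Fin m → Fin n → ℝ) (M : Set (Fin m × Fin n → ℝ)) :
    Set (Fin m × Fin n → ℝ) :=
  {φ ∈ M | linCSP u φ = UplusVal u M}

/-- The zero-sum value `U_ZS = min_x max_y u_L(x,y)`. -/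
def UZSval {m n : ℕ} (u : Fin m → Fin n → ℝ) : ℝ :=
  sInf ((fun x => sSup ((fun y => mixPay u x y) '' stdSimplex ℝ (Fin n))) ''
    stdSimplex ℝ (Fin m))

-- bound lemma
lemma payoff_bd {m n : ℕ} (uL : Fin m → Fin n → ℝ)
    (hbound : ∀ i j, uL i j ∈ Set.Icc (-1 : ℝ) 1)
    {x : Fin m → ℝ} (hx : x ∈ stdSimplex ℝ (Fin m)) (j : Fin n) :
    -1 ≤ (∑ i, x i * uL i j) ∧ (∑ i, x i * uL i j) ≤ 1 := by
  constructor
  · calc (-1 : ℝ) = ∑ i, x i * (-1) := by simp [hx.2]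
    _ ≤ ∑ i, x i * uL i j :=
      Finset.sum_le_sum fun i _ => mul_le_mul_of_nonneg_left (hbound i j).1 (hx.1 i)
  · calc (∑ i, x i * uL i j) ≤ ∑ i, x i * 1 :=
      Finset.sum_le_sum fun i _ => mul_le_mul_of_nonneg_left (hbound i j).2 (hx.1 i)
    _ = 1 := by simp [hx.2]

lemma key_pure_mem {m n : ℕ} (hn : 0 < n) (uL : Fin m → Fin n → ℝ)
    (hbound : ∀ i j, uL i j ∈ Set.Icc (-1 : ℝ) 1) (hA2 : A2cond uL)
    (M : Set (Fin m × Fin n → ℝ)) (hM : IsMenu M) (hsub : M ⊆ MNSR uL)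
    {x : Fin m → ℝ} (hx : x ∈ stdSimplex ℝ (Fin m)) {j : Fin n} (hj : j ∈ BRL uL x) :
    prodCSP x (pureVec j) ∈ M := by
  classical
  haveI : Nonempty (Fin n) := ⟨⟨0, hn⟩⟩
  obtain ⟨x', hx', hBR⟩ := hA2 j ⟨x, hx, hj⟩
  set S : Fin n → ℝ := fun j' => ∑ i, x i * uL i j' with hS
  set S' : Fin n → ℝ := fun j' => ∑ i, x' i * uL i j' with hS'
  have hjBR' : j ∈ BRL uL x' := by rw [hBR]; rfl
  -- the threshold
  set f : Fin n → ℝ := fun j' => if 0 < S j - S j' then (S j - S j') / ((S j - S j') + 2) else 1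
    with hf
  set t0 : ℝ := Finset.univ.inf' Finset.univ_nonempty f with ht0
  have ht0pos : 0 < t0 := by
    rw [ht0, Finset.lt_inf'_iff]
    intro j' _
    rw [hf]
    dsimp only
    split_ifs with h
    · exact div_pos h (by linarith)
    · norm_num
  have ht0le : t0 ≤ 1 := by
    refine le_trans (Finset.inf'_le f (Finset.mem_univ j)) ?_
    rw [hf]; dsimp only; split_ifs with h
    · rw [div_le_one (by linarith)]; linarith
    · exact le_refl 1
  -- the sequence of times
  set τ : ℕ → ℝ := fun k => (t0 / 2) * (1 / (k + 1)) with hτ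
  have hτpos : ∀ k, 0 < τ k := fun k => by
    apply mul_pos (by linarith) (by positivity)
  have hτlt : ∀ k, τ k < t0 := fun k => by
    have h1 : (1 : ℝ) / (k + 1) ≤ 1 := by
      rw [div_le_one (by positivity)]; linarith [Nat.cast_nonneg (α := ℝ) k]
    have : τ k ≤ t0 / 2 := by
      rw [hτ]
      calc (t0/2) * (1/(k+1)) ≤ (t0/2) * 1 :=
        mul_le_mul_of_nonneg_left h1 (by linarith)
      _ = t0 / 2 := by ring
    linarith
  have hτle1 : ∀ k, τ k ≤ 1 := fun k => le_of_lt (lt_of_lt_of_le (hτlt k) ht0le)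
  -- member at each time
  have hmem : ∀ k : ℕ, prodCSP (fun i => (1 - τ k) * x i + τ k * x' i) (pureVec j) ∈ M := by
    intro k
    set t := τ k with hts
    have ht0' : 0 < t := hτpos k
    have ht1 : t ≤ 1 := hτle1 k
    set xt : Fin m → ℝ := fun i => (1 - t) * x i + t * x' i with hxt
    have hxtmem : xt ∈ stdSimplex ℝ (Fin m) := by
      constructor
      · intro i
        have := hx.1 i; have := hx'.1 i
        have : (0:ℝ) ≤ 1 - t := by linarith
        positivity
      · have : ∑ i, ((1 - t) * x i + t * x' i) = (1-t) * ∑ i, x i + t * ∑ i, x' i := by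
          rw [Finset.sum_add_distrib, Finset.mul_sum, Finset.mul_sum]
        rw [hxt]; rw [this, hx.2, hx'.2]; ring
    obtain ⟨y, hy, hyM⟩ := hM.2.2.2 xt hxtmem
    set St : Fin n → ℝ := fun j' => ∑ i, xt i * uL i j' with hSt
    have hStlin : ∀ j', St j' = (1 - t) * S j' + t * S' j' := by
      intro j'
      rw [hSt, hS, hS']
      dsimp only
      rw [Finset.mul_sum, Finset.mul_sum, ← Finset.sum_add_distrib]
      exact Finset.sum_congr rfl fun i _ => by ring
    have hNSR := (hsub hyM).2
    -- support of y is {j}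
    have hsupp : ∀ j'' : Fin n, y j'' ≠ 0 → j'' = j := by
      intro j'' hne
      have hypos : 0 < y j'' := lt_of_le_of_ne (hy.1 j'') (Ne.symm hne)
      have hBRt : j'' ∈ BRL uL xt := by
        intro j'
        have h1 := hNSR j'' j'
        have h2 : ∀ jj : Fin n, (∑ i, prodCSP xt y (i, j'') * uL i jj)
            = y j'' * ∑ i, xt i * uL i jj := by
          intro jj
          rw [Finset.mul_sum]
          exact Finset.sum_congr rfl fun i _ => by simp [prodCSP]; ring
        rw [h2, h2] at h1
        exact (mul_le_mul_iff_right₀ hypos).mp h1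
      -- show j'' = j
      by_cases hpos : 0 < S j - S j''
      · exfalso
        have hub := (payoff_bd uL hbound hx' j).1
        have hub2 := (payoff_bd uL hbound hx' j'').2
        have hd : S' j - S' j'' ≥ -2 := by
          have := (payoff_bd uL hbound hx' j).1
          have := (payoff_bd uL hbound hx' j'').2
          simp only [hS'] at *
          linarith
        have htlt : t < (S j - S j'') / ((S j - S j'') + 2) := by
          calc t < t0 := hτlt k
          _ ≤ f j'' := Finset.inf'_le f (Finset.mem_univ j'')
          _ = (S j - S j'') / ((S j - S j'') + 2) := by rw [hf]; simp [hpos]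
        have ht2 : t * ((S j - S j'') + 2) < S j - S j'' := by
          rw [← lt_div_iff₀ (by linarith)] ; exact htlt
        have hlt : St j'' < St j := by
          rw [hStlin, hStlin]
          nlinarith [hpos, hd]
        exact absurd (hBRt j) (not_le.mpr hlt)
      · -- S j ≤ S j'', so j'' ∈ BRL x, then compare at x'
        have hSeq : S j'' = S j := le_antisymm (hj j'') (by linarith [not_lt.mp hpos])
        have hS'le : S' j ≤ S' j'' := by
          have h3 : St j ≤ St j'' := hBRt j
          rw [hStlin, hStlin, hSeq] at h3
          nlinarith
        have : j'' ∈ BRL uL x' := fun j₂ => le_trans (hjBR' j₂) hS'le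
        rw [hBR] at this
        exact this
    have hyeq : y = pureVec j := by
      funext j'
      by_cases hje : j' = j
      · subst hje
        have : ∑ j'' : Fin n, y j'' = y j' := by
          apply Finset.sum_eq_single
          · intro b _ hb
            by_contra hb0
            exact hb (hsupp b hb0)
          · intro h; exact absurd (Finset.mem_univ j') h
        simp [pureVec, ← this, hy.2]
      · simp [pureVec, hje]
        by_contra h0
        exact hje (hsupp j' h0)
    rw [hyeq] at hyM
    exact hyM
  -- take the limit
  have hτ0 : Filter.Tendsto τ Filter.atTop (nhds 0) := by
    rw [hτ]
    have := tendsto_one_div_add_atTop_nhds_zero_nat (𝕜 := ℝ)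
    have h2 := this.const_mul (t0 / 2)
    simpa using h2
  have htend : Filter.Tendsto
      (fun k => prodCSP (fun i => (1 - τ k) * x i + τ k * x' i) (pureVec j))
      Filter.atTop (nhds (prodCSP x (pureVec j))) := by
    rw [tendsto_pi_nhds]
    intro p
    have : Filter.Tendsto (fun k => ((1 - τ k) * x p.1 + τ k * x' p.1) * pureVec j p.2)
        Filter.atTop (nhds (((1 - 0) * x p.1 + 0 * x' p.1) * pureVec j p.2)) := by
      apply Filter.Tendsto.mul _ tendsto_const_nhds
      exact (((tendsto_const_nhds.sub hτ0).mul tendsto_const_nhds).add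
        (hτ0.mul tendsto_const_nhds))
    simpa [prodCSP] using this
  exact hM.1.mem_of_tendsto htend (Filter.Eventually.of_forall hmem)

/-- Assume (A2). Any menu contained in the no-swap-regret menu equals it
(so all no-swap-regret learning algorithms have the same asymptotic menu `M_NSR`). -/
theorem menu_subset_nsr_eq_nsr
    (m n : ℕ) (hm : 0 < m) (hn : 0 < n)
    (uL : Fin m → Fin n → ℝ) (hbound : ∀ i j, uL i j ∈ Set.Icc (-1 : ℝ) 1)
    (hA2 : A2cond uL)
    (M : Set (Fin m × Fin n → ℝ)) (hM : IsMenu M) (hsub : M ⊆ MNSR uL) :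
    M = MNSR uL := by
  classical
  refine Set.Subset.antisymm hsub ?_
  rintro φ ⟨⟨hφ0, hφ1⟩, hNSR⟩
  set c : Fin n → ℝ := fun j => ∑ i, φ (i, j) with hc
  have hcnn : ∀ j, 0 ≤ c j := fun j =>
    Finset.sum_nonneg fun i _ => hφ0 (i, j)
  set s : Finset (Fin n) := Finset.univ.filter (fun j => 0 < c j) with hs
  set xx : Fin n → Fin m → ℝ := fun j i => φ (i, j) / c j with hxx
  have hxmem : ∀ j ∈ s, xx j ∈ stdSimplex ℝ (Fin m) := by
    intro j hj
    have hcj : 0 < c j := (Finset.mem_filter.mp hj).2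
    constructor
    · intro i; exact div_nonneg (hφ0 (i, j)) (le_of_lt hcj)
    · rw [hxx]
      dsimp only
      rw [← Finset.sum_div]
      exact div_self (ne_of_gt hcj)
  have hxBR : ∀ j ∈ s, j ∈ BRL uL (xx j) := by
    intro j hj j'
    have hcj : 0 < c j := (Finset.mem_filter.mp hj).2
    have h1 := hNSR j j'
    have h2 : ∀ jj, (∑ i, xx j i * uL i jj) = (∑ i, φ (i, j) * uL i jj) / c j := by
      intro jj
      rw [Finset.sum_div]
      exact Finset.sum_congr rfl fun i _ => by rw [hxx]; dsimp only; ring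
    rw [h2, h2]
    exact (div_le_div_iff_of_pos_right hcj).mpr h1
  have hcsum : ∑ j ∈ s, c j = 1 := by
    have : ∑ j ∈ s, c j = ∑ j : Fin n, c j := by
      refine Finset.sum_subset (Finset.filter_subset _ _) ?_
      intro j _ hj
      have := Finset.mem_filter.not.mp hj
      push_neg at this
      exact le_antisymm (this (Finset.mem_univ j)) (hcnn j)
    rw [this, ← hφ1, Fintype.sum_prod_type]
    exact Finset.sum_comm
  have hdecomp : φ = ∑ j ∈ s, c j • prodCSP (xx j) (pureVec j) := by
    funext p
    obtain ⟨i, j''⟩ := p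
    rw [Finset.sum_apply]
    have : ∀ j ∈ s, (c j • prodCSP (xx j) (pureVec j)) (i, j'')
        = c j * (xx j i * (if j'' = j then 1 else 0)) := by
      intro j _; simp [prodCSP, pureVec]
    rw [Finset.sum_congr rfl this]
    rw [Finset.sum_eq_single j'']
    · by_cases hcj : 0 < c j''
      · rw [if_pos rfl, mul_one, hxx]
        dsimp only
        rw [mul_comm, div_mul_cancel₀ _ (ne_of_gt hcj)]
      · have hc0 : c j'' = 0 := le_antisymm (not_lt.mp hcj) (hcnn j'')
        have hφij : φ (i, j'') = 0 := by
          have := (Finset.sum_eq_zero_iff_of_nonneg (fun i _ => hφ0 (i, j''))).mp hc0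
          exact this i (Finset.mem_univ i)
        rw [hφij, hc0]; ring
    · intro b _ hb
      rw [if_neg (Ne.symm hb)]
      ring
    · intro h
      have hc0 : c j'' = 0 := by
        by_contra hne
        exact h (Finset.mem_filter.mpr ⟨Finset.mem_univ _, lt_of_le_of_ne (hcnn j'') (Ne.symm hne)⟩)
      rw [hc0]; ring
  rw [hdecomp]
  exact hM.2.1.sum_mem (fun j hj => hcnn j) hcsum
    (fun j hj => key_pure_mem hn uL hbound hA2 M hM hsub (hxmem j hj) (hxBR j hj))
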